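/- Coverage of high-severity contingencies (corrected form): let μ and ν be probability measures on a measurable space with KL(μ‖ν) ≤ ε, let A be a measurable set with μ(A) = δ, and set q := δ − √(ε/2), assumed strictly positive. Let (Z_1, …, Z_m) be i.i.d. samples drawn from ν, and let N := #{i ≤ m : Z_i ∈ A}. Then for any η ∈ (0,1), P(N ≥ (1−η) m q) ≥ 1 − exp(−η² m q / 2). -/

import Mathlib

open MeasureTheory
open scoped ENNReal Classical

section AuxLemmas

open Real


open Real


lemma aux_H_deriv {y : ℝ} (hy : 0 < y) :
    HasDerivAt (fun x : ℝ => (x + 1) * Real.log x - 2 * (x - 1))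
      (Real.log y + 1 / y - 1) y := by
  have h1 : HasDerivAt (fun x : ℝ => x + 1) 1 y := by simpa using (hasDerivAt_id y).add_const 1
  have h2 : HasDerivAt Real.log (1 / y) y := by
    simpa [one_div] using Real.hasDerivAt_log hy.ne'
  have h3 : HasDerivAt (fun x : ℝ => (x + 1) * Real.log x)
      (1 * Real.log y + (y + 1) * (1 / y)) y := h1.mul h2
  have h4 : HasDerivAt (fun x : ℝ => 2 * (x - 1)) 2 y := by
    simpa using ((hasDerivAt_id y).sub_const 1).const_mul 2
  have h5 := h3.sub h4
  refine h5.congr_deriv ?_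
  field_simp [hy.ne']
  ring

lemma aux_H_nonneg {x : ℝ} (hx : 1 ≤ x) : 0 ≤ (x + 1) * Real.log x - 2 * (x - 1) := by
  set H : ℝ → ℝ := fun x => (x + 1) * Real.log x - 2 * (x - 1) with hH
  have hmono : MonotoneOn H (Set.Icc (1:ℝ) x) := by
    have hpos : ∀ y ∈ Set.Icc (1:ℝ) x, 0 < y := fun y hy => lt_of_lt_of_le one_pos hy.1
    apply monotoneOn_of_deriv_nonneg (convex_Icc _ _)
    · exact fun y hy => ((aux_H_deriv (hpos y hy)).continuousAt).continuousWithinAt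
    · intro y hy
      rw [interior_Icc] at hy
      exact (aux_H_deriv (hpos y (Set.mem_Icc_of_Ioo hy))).differentiableAt.differentiableWithinAt
    · intro y hy
      rw [interior_Icc] at hy
      have hy0 : (0:ℝ) < y := lt_trans one_pos hy.1
      rw [(aux_H_deriv hy0).deriv]
      have : Real.log (1 / y) ≤ 1 / y - 1 := Real.log_le_sub_one_of_pos (by positivity)
      rw [Real.log_div one_ne_zero hy0.ne', Real.log_one] at this
      linarith
  have h := hmono (Set.left_mem_Icc.2 hx) (Set.right_mem_Icc.2 hx) hx
  simp only [hH, Real.log_one] at h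
  linarith

lemma aux_H_nonpos {x : ℝ} (hx : 0 < x) (hx1 : x ≤ 1) :
    (x + 1) * Real.log x - 2 * (x - 1) ≤ 0 := by
  set H : ℝ → ℝ := fun x => (x + 1) * Real.log x - 2 * (x - 1) with hH
  have hmono : MonotoneOn H (Set.Icc x 1) := by
    have hpos : ∀ y ∈ Set.Icc x (1:ℝ), 0 < y := fun y hy => lt_of_lt_of_le hx hy.1
    apply monotoneOn_of_deriv_nonneg (convex_Icc _ _)
    · exact fun y hy => ((aux_H_deriv (hpos y hy)).continuousAt).continuousWithinAt
    · intro y hy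
      rw [interior_Icc] at hy
      exact (aux_H_deriv (hpos y (Set.mem_Icc_of_Ioo hy))).differentiableAt.differentiableWithinAt
    · intro y hy
      rw [interior_Icc] at hy
      have hy0 : (0:ℝ) < y := lt_of_le_of_lt hx.le hy.1
      rw [(aux_H_deriv hy0).deriv]
      have : Real.log (1 / y) ≤ 1 / y - 1 := Real.log_le_sub_one_of_pos (by positivity)
      rw [Real.log_div one_ne_zero hy0.ne', Real.log_one] at this
      linarith
  have h := hmono (Set.left_mem_Icc.2 hx1) (Set.right_mem_Icc.2 hx1) hx1
  simp only [hH, Real.log_one] at h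
  linarith

lemma aux_G_deriv {y : ℝ} (hy : 0 < y) :
    HasDerivAt (fun x : ℝ => (2 * x + 4) * (x * Real.log x - x + 1) - 3 * (x - 1) ^ 2)
      (4 * ((y + 1) * Real.log y - 2 * (y - 1))) y := by
  have h1 : HasDerivAt (fun x : ℝ => 2 * x + 4) 2 y := by
    simpa using ((hasDerivAt_id y).const_mul 2).add_const 4
  have hml : HasDerivAt (fun x : ℝ => x * Real.log x) (Real.log y + 1) y :=
    Real.hasDerivAt_mul_log hy.ne'
  have h2 : HasDerivAt (fun x : ℝ => x * Real.log x - x + 1) (Real.log y + 1 - 1) y :=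
    (hml.sub (hasDerivAt_id y)).add_const 1
  have h3 := h1.mul h2
  have h4 : HasDerivAt (fun x : ℝ => 3 * (x - 1) ^ 2) (3 * (2 * (y - 1))) y := by
    have := (((hasDerivAt_id y).sub_const 1).pow 2).const_mul 3
    simpa using this
  have h5 := h3.sub h4
  refine h5.congr_deriv ?_
  ring

/-- Pointwise Pinsker-type inequality: `3(x-1)² ≤ (2x+4)(x log x - x + 1)` for `x ≥ 0`. -/
lemma aux_pinsker_pointwise {x : ℝ} (hx : 0 ≤ x) :
    3 * (x - 1) ^ 2 ≤ (2 * x + 4) * (x * Real.log x - x + 1) := by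
  set G : ℝ → ℝ := fun x => (2 * x + 4) * (x * Real.log x - x + 1) - 3 * (x - 1) ^ 2 with hG
  have hG1 : G 1 = 0 := by simp [hG]
  rcases le_or_gt 1 x with hx1 | hx1
  · -- monotone on [1, x]
    have hmono : MonotoneOn G (Set.Icc (1:ℝ) x) := by
      have hpos : ∀ y ∈ Set.Icc (1:ℝ) x, 0 < y := fun y hy => lt_of_lt_of_le one_pos hy.1
      apply monotoneOn_of_deriv_nonneg (convex_Icc _ _)
      · exact fun y hy => ((aux_G_deriv (hpos y hy)).continuousAt).continuousWithinAt
      · intro y hy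
        rw [interior_Icc] at hy
        exact (aux_G_deriv (hpos y (Set.mem_Icc_of_Ioo hy))).differentiableAt.differentiableWithinAt
      · intro y hy
        rw [interior_Icc] at hy
        rw [(aux_G_deriv (lt_trans one_pos hy.1)).deriv]
        have := aux_H_nonneg hy.1.le
        linarith
    have h := hmono (Set.left_mem_Icc.2 hx1) (Set.right_mem_Icc.2 hx1) hx1
    rw [hG1] at h
    simpa [hG] using h
  · -- antitone on [0, 1]
    have hanti : AntitoneOn G (Set.Icc (0:ℝ) 1) := by
      apply antitoneOn_of_deriv_nonpos (convex_Icc _ _)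
      · apply ContinuousOn.sub
        · exact (ContinuousOn.mul (by fun_prop)
            (((Real.continuous_mul_log).continuousOn).sub continuousOn_id |>.add continuousOn_const))
        · fun_prop
      · intro y hy
        rw [interior_Icc] at hy
        exact (aux_G_deriv hy.1).differentiableAt.differentiableWithinAt
      · intro y hy
        rw [interior_Icc] at hy
        rw [(aux_G_deriv hy.1).deriv]
        have := aux_H_nonpos hy.1 hy.2.le
        linarith
    have h := hanti (Set.mem_Icc.2 ⟨hx, hx1.le⟩) (Set.mem_Icc.2 ⟨zero_le_one, le_refl 1⟩) hx1.le
    rw [hG1] at h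
    simpa [hG] using h



lemma aux_F_hasDeriv {y : ℝ} (hy1 : 0 < 1 - y) :
    HasDerivAt (fun x : ℝ => (1 - x) * Real.log (1 - x) + x - x ^ 2 / 2)
      (-Real.log (1 - y) - y) y := by
  have h1 : HasDerivAt (fun x : ℝ => 1 - x) (-1) y := by
    simpa using (hasDerivAt_id y).const_sub 1
  have h2 : HasDerivAt (fun x : ℝ => Real.log (1 - x)) (-1 / (1 - y)) y := by
    have := (Real.hasDerivAt_log hy1.ne').comp y h1
    simpa [div_eq_mul_inv, mul_comm, Function.comp_def] using this
  have h3 : HasDerivAt (fun x : ℝ => (1 - x) * Real.log (1 - x))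
      ((-1) * Real.log (1 - y) + (1 - y) * (-1 / (1 - y))) y := h1.mul h2
  have h4 : HasDerivAt (fun x : ℝ => x ^ 2 / 2) y y := by
    have := (hasDerivAt_pow 2 y).div_const 2
    simpa using this
  have h5 := (h3.add (hasDerivAt_id y)).sub h4
  refine h5.congr_deriv ?_
  field_simp [hy1.ne']
  ring

/-- `(1-η) log(1-η) + η ≥ η²/2` for `η ∈ [0,1)`. -/
lemma aux_chernoff_log_ineq {η : ℝ} (h0 : 0 ≤ η) (h1 : η < 1) :
    η ^ 2 / 2 ≤ (1 - η) * Real.log (1 - η) + η := by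
  set F : ℝ → ℝ := fun x => (1 - x) * Real.log (1 - x) + x - x ^ 2 / 2 with hF
  have hpos : ∀ y ∈ Set.Icc (0:ℝ) η, 0 < 1 - y := fun y hy => by
    have := hy.2; simp only [Set.mem_Icc] at hy; nlinarith [hy.2]
  have hmono : MonotoneOn F (Set.Icc (0:ℝ) η) := by
    apply monotoneOn_of_deriv_nonneg (convex_Icc _ _)
    · intro y hy
      exact ((aux_F_hasDeriv (hpos y hy)).continuousAt).continuousWithinAt
    · intro y hy
      rw [interior_Icc] at hy
      exact (aux_F_hasDeriv (hpos y (Set.mem_Icc_of_Ioo hy))).differentiableAt.differentiableWithinAt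
    · intro y hy
      rw [interior_Icc] at hy
      have hy1 : 0 < 1 - y := hpos y (Set.mem_Icc_of_Ioo hy)
      rw [(aux_F_hasDeriv hy1).deriv]
      have hlog : Real.log (1 - y) ≤ -y := by
        have := Real.log_le_sub_one_of_pos hy1
        linarith
      linarith
  have h := hmono (Set.left_mem_Icc.2 h0) (Set.right_mem_Icc.2 h0) h0
  simp only [hF] at h
  norm_num at h
  linarith


lemma aux_rpow_two_sqrt {a : ℝ} (ha : 0 ≤ a) : (Real.sqrt a) ^ (2:ℝ) = a := by
  rw [show ((2:ℝ)) = ((2:ℕ):ℝ) by norm_num, Real.rpow_natCast, Real.sq_sqrt ha]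

lemma aux_phi_nonneg {x : ℝ} (hx : 0 ≤ x) : 0 ≤ x * Real.log x - x + 1 := by
  have h := aux_pinsker_pointwise hx
  nlinarith [sq_nonneg (x - 1)]

/-- One-sided Pinsker inequality. -/
lemma aux_pinsker {Ω : Type*} [MeasurableSpace Ω] (μ ν : Measure Ω)
    [IsProbabilityMeasure μ] [IsProbabilityMeasure ν]
    (hac : μ ≪ ν) (hint : Integrable (llr μ ν) μ) (A : Set Ω) (hA : MeasurableSet A) :
    (μ A).toReal - (ν A).toReal ≤ Real.sqrt ((∫ x, llr μ ν x ∂μ) / 2) := by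
  set gr : Ω → ℝ := fun x => (μ.rnDeriv ν x).toReal with hgr
  have hgrm : Measurable gr := (Measure.measurable_rnDeriv μ ν).ennreal_toReal
  have hgr0 : ∀ x, 0 ≤ gr x := fun x => ENNReal.toReal_nonneg
  have hint_gr : Integrable gr ν := Measure.integrable_toReal_rnDeriv
  have hgrint : ∫ x, gr x ∂ν = 1 := by
    rw [hgr, Measure.integral_toReal_rnDeriv hac]
    simp
  set I := ∫ x, llr μ ν x ∂μ with hI
  -- express KL as ν-integral
  have hKLν : ∫ x, gr x * Real.log (gr x) ∂ν = I := by
    have h := integral_rnDeriv_smul hac (f := llr μ ν)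
    simpa [hgr, hI, llr_def, smul_eq_mul] using h
  have hint2 : Integrable (fun x => gr x * Real.log (gr x)) ν := by
    have := (integrable_rnDeriv_smul_iff hac (f := llr μ ν)).2 hint
    simpa [llr_def, smul_eq_mul] using this
  set Φg : Ω → ℝ := fun x => gr x * Real.log (gr x) - gr x + 1 with hΦg
  have hΦm : Measurable Φg := ((hgrm.mul (hgrm.log)).sub hgrm).add measurable_const
  have hΦint : Integrable Φg ν := (hint2.sub hint_gr).add (integrable_const 1)
  have hΦnonneg : ∀ x, 0 ≤ Φg x := fun x => aux_phi_nonneg (hgr0 x)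
  have hsubint : Integrable (fun x => gr x * Real.log (gr x) - gr x) ν :=
    hint2.sub hint_gr
  have hΦint_eq : ∫ x, Φg x ∂ν = I := by
    rw [show (∫ x, Φg x ∂ν) = ∫ x, (gr x * Real.log (gr x) - gr x) + 1 ∂ν from rfl,
      integral_add hsubint (integrable_const 1),
      integral_sub hint2 hint_gr, hgrint, hKLν]
    simp
  have hI0 : 0 ≤ I := hΦint_eq ▸ integral_nonneg (fun x => hΦnonneg x)
  -- Cauchy–Schwarz via lintegral
  set u : Ω → ℝ := fun x => |gr x - 1| with hu
  have hu_int : Integrable u ν := (hint_gr.sub (integrable_const 1)).abs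
  have hCS : ∫ x, u x ∂ν ≤ Real.sqrt 2 * Real.sqrt I := by
    set f1 : Ω → ℝ≥0∞ := fun x => ENNReal.ofReal (Real.sqrt ((2 * gr x + 4) / 3)) with hf1
    set f2 : Ω → ℝ≥0∞ := fun x => ENNReal.ofReal (Real.sqrt (Φg x)) with hf2
    have hf1m : AEMeasurable f1 ν := by fun_prop
    have hf2m : AEMeasurable f2 ν := by fun_prop
    have hpq : Real.HolderConjugate 2 2 := Real.holderConjugate_iff.2 ⟨one_lt_two, by norm_num⟩
    have hCS0 := ENNReal.lintegral_mul_le_Lp_mul_Lq ν hpq hf1m hf2m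
    -- pointwise bound
    have hpt : ∀ x, ENNReal.ofReal (u x) ≤ (f1 * f2) x := by
      intro x
      have h3 : (0:ℝ) < 2 * gr x + 4 := by nlinarith [hgr0 x]
      have hab : ((2 * gr x + 4) / 3) * Φg x = (2 * gr x + 4) * Φg x / 3 := by ring
      have hsq : u x ^ 2 ≤ ((2 * gr x + 4) / 3) * Φg x := by
        have := aux_pinsker_pointwise (hgr0 x)
        rw [hu]
        rw [sq_abs]
        rw [hΦg]
        nlinarith
      have hle : u x ≤ Real.sqrt ((2 * gr x + 4) / 3) * Real.sqrt (Φg x) := by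
        rw [← Real.sqrt_mul (by positivity)]
        exact Real.le_sqrt_of_sq_le hsq
      simp only [Pi.mul_apply, hf1, hf2]
      rw [← ENNReal.ofReal_mul (Real.sqrt_nonneg _)]
      exact ENNReal.ofReal_le_ofReal hle
    -- compute ∫⁻ f1 ^ 2
    have hf1sq : ∀ x, f1 x ^ (2:ℝ) = ENNReal.ofReal (2/3) * ENNReal.ofReal (gr x)
        + ENNReal.ofReal (4/3) := by
      intro x
      have h3 : (0:ℝ) ≤ (2 * gr x + 4) / 3 := by nlinarith [hgr0 x]
      simp only [hf1]
      rw [ENNReal.ofReal_rpow_of_nonneg (Real.sqrt_nonneg _) (by norm_num : (0:ℝ) ≤ 2),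
        aux_rpow_two_sqrt h3,
        ← ENNReal.ofReal_mul (by norm_num), ← ENNReal.ofReal_add (by positivity) (by norm_num)]
      congr 1
      ring
    have hgr_lint : ∫⁻ x, ENNReal.ofReal (gr x) ∂ν = 1 := by
      have hae : (fun x => ENNReal.ofReal (gr x)) =ᵐ[ν] μ.rnDeriv ν := by
        filter_upwards [Measure.rnDeriv_lt_top μ ν] with x hx
        rw [hgr, ENNReal.ofReal_toReal hx.ne]
      rw [lintegral_congr_ae hae, Measure.lintegral_rnDeriv hac]
      simp
    have hint_f1 : ∫⁻ x, f1 x ^ (2:ℝ) ∂ν = ENNReal.ofReal 2 := by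
      simp_rw [hf1sq]
      rw [lintegral_add_right _ measurable_const, lintegral_const_mul _ (by fun_prop), hgr_lint]
      simp only [lintegral_const, measure_univ, mul_one]
      rw [← ENNReal.ofReal_add (by norm_num) (by norm_num)]
      norm_num
    have hint_f2 : ∫⁻ x, f2 x ^ (2:ℝ) ∂ν = ENNReal.ofReal I := by
      have hf2sq : ∀ x, f2 x ^ (2:ℝ) = ENNReal.ofReal (Φg x) := by
        intro x
        simp only [hf2]
        rw [ENNReal.ofReal_rpow_of_nonneg (Real.sqrt_nonneg _) (by norm_num : (0:ℝ) ≤ 2),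
          aux_rpow_two_sqrt (hΦnonneg x)]
      simp_rw [hf2sq]
      rw [← ofReal_integral_eq_lintegral_ofReal hΦint (ae_of_all _ (fun x => hΦnonneg x)), hΦint_eq]
    have hLHS : ENNReal.ofReal (∫ x, u x ∂ν) = ∫⁻ x, ENNReal.ofReal (u x) ∂ν :=
      ofReal_integral_eq_lintegral_ofReal hu_int (ae_of_all _ (fun x => abs_nonneg _))
    have hmain : ENNReal.ofReal (∫ x, u x ∂ν) ≤
        ENNReal.ofReal (Real.sqrt 2 * Real.sqrt I) := by
      rw [hLHS]
      calc ∫⁻ x, ENNReal.ofReal (u x) ∂ν ≤ ∫⁻ x, (f1 * f2) x ∂ν := lintegral_mono hpt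
        _ ≤ (∫⁻ x, f1 x ^ (2:ℝ) ∂ν) ^ (1/(2:ℝ)) * (∫⁻ x, f2 x ^ (2:ℝ) ∂ν) ^ (1/(2:ℝ)) := hCS0
        _ = ENNReal.ofReal (Real.sqrt 2 * Real.sqrt I) := by
            rw [hint_f1, hint_f2,
              ENNReal.ofReal_rpow_of_nonneg (by norm_num : (0:ℝ) ≤ 2) (by norm_num : (0:ℝ) ≤ 1/2),
              ENNReal.ofReal_rpow_of_nonneg hI0 (by norm_num : (0:ℝ) ≤ 1/2),
              ← Real.sqrt_eq_rpow, ← Real.sqrt_eq_rpow,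
              ← ENNReal.ofReal_mul (Real.sqrt_nonneg _)]
    rwa [ENNReal.ofReal_le_ofReal_iff (by positivity)] at hmain
  -- halving
  have hset : ∫ x in A, (gr x - 1) ∂ν = (μ A).toReal - (ν A).toReal := by
    rw [integral_sub (hint_gr.integrableOn) (integrableOn_const (measure_ne_top ν A))]
    rw [hgr, Measure.setIntegral_toReal_rnDeriv hac A, setIntegral_const]
    simp [measureReal_def]
  have hsub1 : Integrable (fun x => gr x - 1) ν := hint_gr.sub (integrable_const 1)
  have htotal : ∫ x in A, (gr x - 1) ∂ν + ∫ x in Aᶜ, (gr x - 1) ∂ν = 0 := by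
    rw [integral_add_compl hA hsub1, integral_sub hint_gr (integrable_const 1), hgrint]
    simp
  have hAbound : ∫ x in A, (gr x - 1) ∂ν ≤ ∫ x in A, u x ∂ν :=
    setIntegral_mono_on hsub1.integrableOn
      hu_int.integrableOn hA (fun x _ => le_abs_self _)
  have hAcbound : -∫ x in Aᶜ, (gr x - 1) ∂ν ≤ ∫ x in Aᶜ, u x ∂ν := by
    rw [← integral_neg]
    exact setIntegral_mono_on hsub1.neg.integrableOn
      hu_int.integrableOn hA.compl (fun x _ => neg_le_abs _)
  have husplit : ∫ x in A, u x ∂ν + ∫ x in Aᶜ, u x ∂ν = ∫ x, u x ∂ν :=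
    integral_add_compl hA hu_int
  have h2 : 2 * ((μ A).toReal - (ν A).toReal) ≤ Real.sqrt 2 * Real.sqrt I := by
    calc 2 * ((μ A).toReal - (ν A).toReal)
        = ∫ x in A, (gr x - 1) ∂ν + (- ∫ x in Aᶜ, (gr x - 1) ∂ν) := by rw [hset]; linarith [htotal]
      _ ≤ ∫ x in A, u x ∂ν + ∫ x in Aᶜ, u x ∂ν := add_le_add hAbound hAcbound
      _ = ∫ x, u x ∂ν := husplit
      _ ≤ Real.sqrt 2 * Real.sqrt I := hCS
  have hfinal : Real.sqrt 2 * Real.sqrt I / 2 = Real.sqrt (I / 2) := by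
    rw [Real.sqrt_div hI0 2]
    have h2 : Real.sqrt 2 * Real.sqrt 2 = 2 := Real.mul_self_sqrt (by norm_num)
    have h2pos : (0:ℝ) < Real.sqrt 2 := Real.sqrt_pos.2 (by norm_num)
    field_simp
    nlinarith [Real.sqrt_nonneg I]
  rw [← hfinal]
  linarith


lemma aux_chernoff {Ω : Type*} [MeasurableSpace Ω] (ν : Measure Ω) [IsProbabilityMeasure ν]
    (A : Set Ω) (hA : MeasurableSet A) (q : ℝ) (hq0 : 0 < q)
    (hqp : q ≤ (ν A).toReal) (m : ℕ) (η : ℝ) (hη0 : 0 < η) (hη1 : η < 1) :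
    ENNReal.ofReal (1 - Real.exp (-(η ^ 2 * (m : ℝ) * q) / 2)) ≤
      (Measure.pi fun _ : Fin m => ν)
        {ω | (1 - η) * (m : ℝ) * q ≤ ∑ i, A.indicator (fun _ => (1 : ℝ)) (ω i)} := by
  classical
  set p := (ν A).toReal with hp
  have hp1 : p ≤ 1 := by
    rw [hp]
    exact ENNReal.toReal_le_of_le_ofReal zero_le_one (by simpa using prob_le_one)
  have hq1 : q ≤ 1 := hqp.trans hp1
  set t := -Real.log (1 - η) with ht
  have h1η : (0:ℝ) < 1 - η := by linarith
  have hexp_t : Real.exp (-t) = 1 - η := by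
    rw [ht, neg_neg, Real.exp_log h1η]
  have ht0 : 0 < t := by
    rw [ht, neg_pos]
    exact Real.log_neg h1η (by linarith)
  set a := (1 - η) * (m : ℝ) * q with ha
  set P := (Measure.pi fun _ : Fin m => ν) with hP
  haveI : IsProbabilityMeasure P := by rw [hP]; infer_instance
  set S : (Fin m → Ω) → ℝ := fun ω => ∑ i, A.indicator (fun _ => (1 : ℝ)) (ω i) with hS
  have hindm : Measurable (A.indicator (fun _ => (1:ℝ))) := measurable_const.indicator hA
  have hSm : Measurable S := by
    apply Finset.measurable_sum
    intro i _
    exact hindm.comp (measurable_pi_apply i)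
  have hind0 : ∀ x, 0 ≤ A.indicator (fun _ => (1:ℝ)) x := fun x =>
    Set.indicator_nonneg (fun _ _ => zero_le_one) x
  have hS0 : ∀ ω, 0 ≤ S ω := fun ω => Finset.sum_nonneg (fun i _ => hind0 _)
  set f : (Fin m → Ω) → ℝ := fun ω => Real.exp (-t * S ω) with hf
  have hfm : Measurable f := (hSm.const_mul (-t)).exp
  have hf0 : ∀ ω, 0 ≤ f ω := fun ω => (Real.exp_pos _).le
  have hf1 : ∀ ω, f ω ≤ 1 := by
    intro ω
    rw [hf]
    simp only
    rw [show (1:ℝ) = Real.exp 0 by simp]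
    apply Real.exp_le_exp.2
    have := hS0 ω
    nlinarith
  have hf_int : Integrable f P := by
    apply Integrable.mono' (integrable_const (1:ℝ)) hfm.aestronglyMeasurable
    filter_upwards with ω
    rw [Real.norm_eq_abs, abs_of_nonneg (hf0 ω)]
    exact hf1 ω
  -- single-factor function
  set h : Ω → ℝ := fun x => Real.exp (-t * A.indicator (fun _ => (1:ℝ)) x) with hh
  have hh_eq : ∀ x, h x = 1 - (1 - Real.exp (-t)) * A.indicator (fun _ => (1:ℝ)) x := by
    intro x
    by_cases hx : x ∈ A
    · simp [hh, Set.indicator_of_mem hx]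
    · simp [hh, Set.indicator_of_notMem hx]
  -- product structure
  have hf_prod : ∀ ω, f ω = ∏ i, h (ω i) := by
    intro ω
    simp only [hf, hS]
    rw [Finset.mul_sum, Real.exp_sum]
  -- integral of h
  have hind_int : Integrable (A.indicator (fun _ => (1:ℝ))) ν := (integrable_const (1:ℝ)).indicator hA
  have hh_int : ∫ x, h x ∂ν = 1 - (1 - Real.exp (-t)) * p := by
    simp_rw [hh_eq]
    rw [integral_sub (integrable_const 1) (hind_int.const_mul _),
      integral_const_mul, integral_indicator_const _ hA]
    simp [hp, measureReal_def]
  -- the product integral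
  letI : MeasureSpace Ω := ⟨ν⟩
  have hvol : (volume : Measure Ω) = ν := rfl
  have hPvol : P = (volume : Measure (Fin m → Ω)) := rfl
  have hf_integral : ∫ ω, f ω ∂P = (1 - (1 - Real.exp (-t)) * p) ^ m := by
    rw [hP]
    simp_rw [hf_prod]
    rw [MeasureTheory.integral_fintype_prod_eq_pow (ι := Fin m) h, hh_int]
    simp
  -- bound the integral
  have hfac0 : 0 ≤ 1 - (1 - Real.exp (-t)) * p := by
    rw [hexp_t]
    nlinarith [hqp, hq0]
  have hfac : 1 - (1 - Real.exp (-t)) * p ≤ Real.exp (-(q * η)) := by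
    rw [hexp_t]
    have h1 : 1 - η * q ≤ Real.exp (-(q * η)) := by
      have := Real.add_one_le_exp (-(q * η))
      linarith
    nlinarith [hqp]
  have hf_int_le : ∫ ω, f ω ∂P ≤ Real.exp (-((m:ℝ) * q * η)) := by
    rw [hf_integral]
    calc (1 - (1 - Real.exp (-t)) * p) ^ m ≤ (Real.exp (-(q * η))) ^ m :=
          pow_le_pow_left₀ hfac0 hfac m
      _ = Real.exp (-((m:ℝ) * q * η)) := by
          rw [← Real.exp_nat_mul]
          ring_nf
  -- Markov
  set ε₀ := Real.exp (-t * a) with hε₀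
  have hε₀pos : 0 < ε₀ := Real.exp_pos _
  have hmarkov := mul_meas_ge_le_integral_of_nonneg
    (ae_of_all P (fun ω => hf0 ω)) hf_int ε₀
  -- complement event
  set E := {ω : Fin m → Ω | a ≤ S ω} with hE
  have hEm : MeasurableSet E := hSm measurableSet_Ici
  have hcompl_sub : Eᶜ ⊆ {ω | ε₀ ≤ f ω} := by
    intro ω hω
    simp only [hE, Set.mem_compl_iff, Set.mem_setOf_eq, not_le] at hω
    simp only [Set.mem_setOf_eq, hε₀, hf]
    apply Real.exp_le_exp.2
    nlinarith
  have hEc_le : (P Eᶜ).toReal ≤ Real.exp (t * a - (m:ℝ) * q * η) := by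
    have h1 : (P Eᶜ).toReal ≤ (P {ω | ε₀ ≤ f ω}).toReal := by
      apply ENNReal.toReal_mono (measure_ne_top _ _)
      exact measure_mono hcompl_sub
    have h2 : (P {ω | ε₀ ≤ f ω}).toReal ≤ (∫ ω, f ω ∂P) / ε₀ := by
      rw [le_div_iff₀ hε₀pos]
      rw [measureReal_def] at hmarkov
      linarith [hmarkov]
    have h3 : (∫ ω, f ω ∂P) / ε₀ ≤ Real.exp (-((m:ℝ) * q * η)) / ε₀ :=
      (div_le_div_iff_of_pos_right hε₀pos).2 hf_int_le
    have h4 : Real.exp (-((m:ℝ) * q * η)) / ε₀ = Real.exp (t * a - (m:ℝ) * q * η) := by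
      rw [hε₀, ← Real.exp_sub]
      ring_nf
    linarith
  have hexp_mono : Real.exp (t * a - (m:ℝ) * q * η) ≤
      Real.exp (-(η ^ 2 * (m : ℝ) * q) / 2) := by
    apply Real.exp_le_exp.2
    have haux := aux_chernoff_log_ineq hη0.le hη1
    have hmq : 0 ≤ (m:ℝ) * q := mul_nonneg (Nat.cast_nonneg m) hq0.le
    have hta : t * a = -((m:ℝ) * q) * ((1 - η) * Real.log (1 - η)) := by
      rw [ht, ha]; ring
    nlinarith [mul_le_mul_of_nonneg_left haux hmq]
  have hEc_bound : P Eᶜ ≤ ENNReal.ofReal (Real.exp (-(η ^ 2 * (m : ℝ) * q) / 2)) := by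
    rw [← ENNReal.ofReal_toReal (measure_ne_top P Eᶜ)]
    exact ENNReal.ofReal_le_ofReal (hEc_le.trans hexp_mono)
  calc ENNReal.ofReal (1 - Real.exp (-(η ^ 2 * (m : ℝ) * q) / 2))
      = 1 - ENNReal.ofReal (Real.exp (-(η ^ 2 * (m : ℝ) * q) / 2)) := by
        rw [← ENNReal.ofReal_one, ← ENNReal.ofReal_sub _ (Real.exp_pos _).le]
    _ ≤ 1 - P Eᶜ := tsub_le_tsub_left hEc_bound 1
    _ ≤ P E := by
        rw [tsub_le_iff_right]
        have huniv : P E + P Eᶜ = 1 := by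
          rw [measure_add_measure_compl hEm, measure_univ]
        exact huniv.ge

end AuxLemmas

/-- The Kullback–Leibler divergence of `μ` from `ν`: equal to `∫ log (dμ/dν) dμ`
when `μ` is absolutely continuous with respect to `ν` (and the log-likelihood ratio
is integrable), and `+∞` otherwise. -/
noncomputable def klDiv {Ω : Type*} [MeasurableSpace Ω] (μ ν : Measure Ω) : ℝ≥0∞ :=
  if μ ≪ ν ∧ Integrable (llr μ ν) μ then ENNReal.ofReal (∫ x, llr μ ν x ∂μ) else ⊤

/-- Coverage of high-severity contingencies: if `KL(μ‖ν) ≤ ε`, `μ(A) = δ`, and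
`q := δ − √(ε/2) > 0`, then for `m` i.i.d. samples `Z₁,…,Z_m ∼ ν` and
`N := #{i : Z_i ∈ A}`, for any `η ∈ (0,1)` we have
`P(N ≥ (1−η) m q) ≥ 1 − exp(−η² m q / 2)`. -/
theorem coverage_of_high_severity {Ω : Type*} [MeasurableSpace Ω]
    (μ ν : Measure Ω) [IsProbabilityMeasure μ] [IsProbabilityMeasure ν]
    (ε : ℝ) (hKL : klDiv μ ν ≤ ENNReal.ofReal ε)
    (δ : ℝ) (A : Set Ω) (hA : MeasurableSet A) (hμA : μ A = ENNReal.ofReal δ)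
    (q : ℝ) (hq : q = δ - Real.sqrt (ε / 2)) (hqpos : 0 < q)
    (m : ℕ) (η : ℝ) (hη : η ∈ Set.Ioo (0 : ℝ) 1) :
    ENNReal.ofReal (1 - Real.exp (-(η ^ 2 * (m : ℝ) * q) / 2)) ≤
      (Measure.pi fun _ : Fin m => ν)
        {ω | (1 - η) * (m : ℝ) * q ≤ ∑ i, A.indicator (fun _ => (1 : ℝ)) (ω i)} := by
  -- unpack the KL divergence hypothesis
  by_cases hcond : μ ≪ ν ∧ Integrable (llr μ ν) μ
  swap
  · rw [klDiv, if_neg hcond] at hKL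
    exact absurd (top_le_iff.1 hKL) ENNReal.ofReal_ne_top
  obtain ⟨hac, hint⟩ := hcond
  rw [klDiv, if_pos ⟨hac, hint⟩] at hKL
  set I := ∫ x, llr μ ν x ∂μ with hI
  -- δ ≥ q > 0
  have hδq : q ≤ δ := by rw [hq]; linarith [Real.sqrt_nonneg (ε / 2)]
  have hδ0 : 0 ≤ δ := le_trans hqpos.le hδq
  have hμAt : (μ A).toReal = δ := by rw [hμA, ENNReal.toReal_ofReal hδ0]
  -- Pinsker's inequality
  have hpinsker := aux_pinsker μ ν hac hint A hA
  -- √(I/2) ≤ √(ε/2)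
  have hsq : Real.sqrt (I / 2) ≤ Real.sqrt (ε / 2) := by
    rcases le_or_gt 0 ε with hε | hε
    · have hIε : I ≤ ε := (ENNReal.ofReal_le_ofReal_iff hε).1 hKL
      exact Real.sqrt_le_sqrt (by linarith)
    · have h0 : ENNReal.ofReal ε = 0 := ENNReal.ofReal_eq_zero.2 hε.le
      rw [h0, le_zero_iff, ENNReal.ofReal_eq_zero] at hKL
      rw [Real.sqrt_eq_zero'.2 (by linarith : I / 2 ≤ 0)]
      exact Real.sqrt_nonneg _
  have hqp : q ≤ (ν A).toReal := by
    rw [hq]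
    have := hpinsker
    rw [hμAt, ← hI] at this
    linarith [hsq]
  exact aux_chernoff ν A hA q hqpos hqp m η hη.1 hη.2
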